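/- Consider the conditional gradient method: given x₀ = y₀ ∈ X, for each k ≥ 1 let x_k ∈ argmin_{x ∈ X} f'(y_{k−1})(x) and let y_k ∈ X be any point with f(y_k) ≤ f((1−γ_k) y_{k−1} + γ_k x_k), where γ_k := 2/(k+1) (this covers both the stepsize α_k = 2/(k+1) and the exact line-search stepsize). Then for every k ≥ 1 and every x ∈ X, f(y_k) − f(x) ≤ (2L/(k(k+1))) Σ_{i=1}^k ‖x_i − y_{i−1}‖² ≤ 2 L D_X²/(k+1). In particular f(y_k) − min_{x∈X} f(x) ≤ 2 L D_X²/(k+1). -/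

import Mathlib

set_option maxHeartbeats 800000

lemma grad_ineq' {E : Type*} [NormedAddCommGroup E] [NormedSpace ℝ E]
    {X : Set E} {f : E → ℝ} {f' : E →L[ℝ] ℝ}
    (hconv : ConvexOn ℝ X f) {a u : E} (ha : a ∈ X) (hu : u ∈ X)
    (hder : HasFDerivAt f f' a) : f' (u - a) ≤ f u - f a := by
  have hline : HasDerivAt (fun t : ℝ => a + t • (u - a)) (u - a) 0 := by
    simpa using ((hasDerivAt_id (0:ℝ)).smul_const (u - a)).const_add a
  have hder' : HasFDerivAt f f' (a + (0:ℝ) • (u - a)) := by simpa using hder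
  have hg : HasDerivAt (fun t : ℝ => f (a + t • (u - a))) (f' (u - a)) 0 :=
    hder'.comp_hasDerivAt 0 hline
  have htend : Filter.Tendsto (slope (fun t : ℝ => f (a + t • (u - a))) 0)
      (nhdsWithin 0 (Set.Ioi 0)) (nhds (f' (u - a))) :=
    (hasDerivAt_iff_tendsto_slope.mp hg).mono_left
      (nhdsWithin_mono 0 (fun t ht => ne_of_gt ht))
  refine le_of_tendsto htend ?_
  filter_upwards [Ioo_mem_nhdsGT_of_mem (Set.mem_Ico.mpr ⟨le_refl (0:ℝ), one_pos⟩)]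
    with t ht
  have hpt : a + t • (u - a) = (1 - t) • a + t • u := by module
  have hcx : f ((1 - t) • a + t • u) ≤ (1 - t) * f a + t * f u :=
    hconv.2 ha hu (by linarith [ht.2]) (le_of_lt ht.1) (by ring)
  have h0 : f (a + (0:ℝ) • (u - a)) = f a := by simp
  rw [slope_def_field, sub_zero, div_le_iff₀ ht.1, h0, hpt]
  nlinarith [hcx]

theorem stmt5 {E : Type*} [NormedAddCommGroup E] [NormedSpace ℝ E] [FiniteDimensional ℝ E]
    (X : Set E) (hXcp : IsCompact X) (hXcv : Convex ℝ X) (hXne : X.Nonempty)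
    (DX : ℝ) (hDX : IsGreatest {d : ℝ | ∃ a ∈ X, ∃ b ∈ X, d = ‖a - b‖} DX)
    (f : E → ℝ) (f' : E → E →L[ℝ] ℝ) (L : ℝ) (hL : 0 < L)
    (hconv : ConvexOn ℝ X f)
    (hder : ∀ a ∈ X, HasFDerivAt f (f' a) a)
    (hsmooth : ∀ a ∈ X, ∀ b ∈ X, f b ≤ f a + f' a (b - a) + L / 2 * ‖b - a‖ ^ 2)
    (x y : ℕ → E) (γ : ℕ → ℝ) (hγ : ∀ k : ℕ, γ k = 2 / (k + 1))
    (hx0 : x 0 ∈ X) (hy0 : y 0 = x 0)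
    (hxk : ∀ k ≥ 1, x k ∈ X ∧ ∀ z ∈ X, f' (y (k - 1)) (x k) ≤ f' (y (k - 1)) z)
    (hyk : ∀ k ≥ 1, y k ∈ X ∧ f (y k) ≤ f ((1 - γ k) • y (k - 1) + γ k • x k)) :
    ∀ k ≥ 1, ∀ u ∈ X,
      f (y k) - f u ≤
        2 * L / (k * (k + 1)) * ∑ i ∈ Finset.Icc 1 k, ‖x i - y (i - 1)‖ ^ 2 ∧
      2 * L / (k * (k + 1)) * ∑ i ∈ Finset.Icc 1 k, ‖x i - y (i - 1)‖ ^ 2 ≤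
        2 * L * DX ^ 2 / (k + 1) := by
  have hyX : ∀ k : ℕ, y k ∈ X := by
    intro k
    cases k with
    | zero => rw [hy0]; exact hx0
    | succ n => exact (hyk (n+1) (Nat.le_add_left 1 n)).1
  have hDX0 : 0 ≤ DX := by
    obtain ⟨a, ha⟩ := hXne
    have h := hDX.2 ⟨a, ha, a, ha, rfl⟩
    simpa using h
  have key : ∀ k : ℕ, ∀ u ∈ X, (k:ℝ) * ((k:ℝ) + 1) * (f (y k) - f u) ≤
      2 * L * ∑ i ∈ Finset.Icc 1 k, ‖x i - y (i - 1)‖ ^ 2 := by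
    intro k
    induction k with
    | zero => intro u hu; simp
    | succ n ih =>
      intro u hu
      have hn1 : (1:ℕ) ≤ n + 1 := Nat.le_add_left 1 n
      obtain ⟨hxmem, hmin⟩ := hxk (n+1) hn1
      obtain ⟨hymem, hyle⟩ := hyk (n+1) hn1
      simp only [Nat.add_sub_cancel] at hmin hyle
      have hn0 : (0:ℝ) ≤ (n:ℝ) := Nat.cast_nonneg n
      have hc2 : (2:ℝ) ≤ (n:ℝ) + 2 := by linarith
      have hcpos : (0:ℝ) < (n:ℝ) + 2 := by linarith
      have hγ' : γ (n+1) = 2 / ((n:ℝ) + 2) := by rw [hγ]; push_cast; ring_nf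
      have hγ0 : 0 ≤ γ (n+1) := by rw [hγ']; positivity
      have hγ1 : γ (n+1) ≤ 1 := by
        rw [hγ', div_le_one hcpos]; linarith
      have hzmem : (1 - γ (n+1)) • y n + γ (n+1) • x (n+1) ∈ X :=
        hXcv (hyX n) hxmem (by linarith) hγ0 (by ring)
      have hsm := hsmooth (y n) (hyX n) _ hzmem
      have hdiff : (1 - γ (n+1)) • y n + γ (n+1) • x (n+1) - y n
          = γ (n+1) • (x (n+1) - y n) := by module
      have hgrad : f' (y n) (u - y n) ≤ f u - f (y n) :=
        grad_ineq' hconv (hyX n) hu (hder (y n) (hyX n))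
      have hminu := hmin u hu
      have hs0 : (0:ℝ) ≤ ‖x (n+1) - y n‖ ^ 2 := by positivity
      have h1 : f (y (n+1)) - f u ≤ (1 - γ (n+1)) * (f (y n) - f u)
          + L/2 * (γ (n+1))^2 * ‖x (n+1) - y n‖ ^ 2 := by
        have e1 : f' (y n) ((1 - γ (n+1)) • y n + γ (n+1) • x (n+1) - y n)
            = γ (n+1) * (f' (y n) (x (n+1)) - f' (y n) (y n)) := by
          rw [hdiff, map_smul, map_sub]; simp [smul_eq_mul]
        have e2 : ‖(1 - γ (n+1)) • y n + γ (n+1) • x (n+1) - y n‖ ^ 2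
            = (γ (n+1))^2 * ‖x (n+1) - y n‖ ^ 2 := by
          rw [hdiff, norm_smul, Real.norm_eq_abs, abs_of_nonneg hγ0]; ring
        have e3 : f' (y n) (x (n+1)) - f' (y n) (y n) ≤ f u - f (y n) := by
          have hms : f' (y n) (u - y n) = f' (y n) u - f' (y n) (y n) := map_sub _ _ _
          linarith [hgrad, hminu]
        rw [e1, e2] at hsm
        have e4 : γ (n+1) * (f' (y n) (x (n+1)) - f' (y n) (y n))
            ≤ γ (n+1) * (f u - f (y n)) := mul_le_mul_of_nonneg_left e3 hγ0
        nlinarith [hyle, hsm, e4]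
      have h1' : ((n:ℝ) + 2)^2 * (f (y (n+1)) - f u)
          ≤ ((n:ℝ) + 2) * (n:ℝ) * (f (y n) - f u) + 2 * L * ‖x (n+1) - y n‖ ^ 2 := by
        have h1'' := mul_le_mul_of_nonneg_left h1 (by positivity : (0:ℝ) ≤ ((n:ℝ) + 2)^2)
        have heq : ((n:ℝ) + 2)^2 * ((1 - γ (n+1)) * (f (y n) - f u)
              + L/2 * (γ (n+1))^2 * ‖x (n+1) - y n‖ ^ 2)
            = ((n:ℝ) + 2) * (n:ℝ) * (f (y n) - f u) + 2 * L * ‖x (n+1) - y n‖ ^ 2 := by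
          rw [hγ']; field_simp; ring
        rw [heq] at h1''
        exact h1''
      have hsum : ∑ i ∈ Finset.Icc 1 (n+1), ‖x i - y (i - 1)‖ ^ 2
          = (∑ i ∈ Finset.Icc 1 n, ‖x i - y (i - 1)‖ ^ 2) + ‖x (n+1) - y n‖ ^ 2 := by
        rw [Finset.sum_Icc_succ_top hn1]; simp
      have ihu := ih u hu
      rw [hsum]
      have hgoal : ((n+1:ℕ):ℝ) * (((n+1:ℕ):ℝ) + 1) = ((n:ℝ) + 1) * ((n:ℝ) + 2) := by
        push_cast; ring
      rw [hgoal]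
      have A := mul_le_mul_of_nonneg_left h1' (by linarith : (0:ℝ) ≤ (n:ℝ) + 1)
      have B := mul_le_mul_of_nonneg_left ihu (by linarith : (0:ℝ) ≤ (n:ℝ) + 2)
      have C : 0 ≤ L * ‖x (n+1) - y n‖ ^ 2 := mul_nonneg hL.le hs0
      have hfin : ((n:ℝ) + 2) * (((n:ℝ) + 1) * ((n:ℝ) + 2) * (f (y (n+1)) - f u))
          ≤ ((n:ℝ) + 2) * (2 * L * ((∑ i ∈ Finset.Icc 1 n, ‖x i - y (i - 1)‖ ^ 2)
            + ‖x (n+1) - y n‖ ^ 2)) := by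
        nlinarith [A, B, C]
      exact le_of_mul_le_mul_left hfin hcpos
  intro k hk u hu
  have hk0 : (0:ℝ) < (k:ℝ) := by exact_mod_cast Nat.lt_of_lt_of_le Nat.zero_lt_one hk
  have hkk : (0:ℝ) < (k:ℝ) * ((k:ℝ) + 1) := by positivity
  constructor
  · rw [div_mul_eq_mul_div, le_div_iff₀ hkk]
    have hkey := key k u hu
    linarith [hkey]
  · have hterm : ∀ i ∈ Finset.Icc 1 k, ‖x i - y (i - 1)‖ ^ 2 ≤ DX ^ 2 := by
      intro i hi
      have hi1 : 1 ≤ i := (Finset.mem_Icc.mp hi).1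
      have hxi : x i ∈ X := (hxk i hi1).1
      have hle : ‖x i - y (i - 1)‖ ≤ DX := hDX.2 ⟨x i, hxi, y (i-1), hyX (i-1), rfl⟩
      exact pow_le_pow_left₀ (norm_nonneg _) hle 2
    have hSle : (∑ i ∈ Finset.Icc 1 k, ‖x i - y (i - 1)‖ ^ 2) ≤ (k:ℝ) * DX ^ 2 := by
      calc (∑ i ∈ Finset.Icc 1 k, ‖x i - y (i - 1)‖ ^ 2)
          ≤ ∑ _i ∈ Finset.Icc 1 k, DX ^ 2 := Finset.sum_le_sum hterm
        _ = (k:ℝ) * DX ^ 2 := by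
            rw [Finset.sum_const, Nat.card_Icc]; simp [nsmul_eq_mul]
    have hcoef : (0:ℝ) ≤ 2 * L / ((k:ℝ) * ((k:ℝ) + 1)) := by positivity
    calc 2 * L / ((k:ℝ) * ((k:ℝ) + 1)) * (∑ i ∈ Finset.Icc 1 k, ‖x i - y (i - 1)‖ ^ 2)
        ≤ 2 * L / ((k:ℝ) * ((k:ℝ) + 1)) * ((k:ℝ) * DX ^ 2) :=
          mul_le_mul_of_nonneg_left hSle hcoef
      _ = 2 * L * DX ^ 2 / ((k:ℝ) + 1) := by
          rw [div_mul_eq_mul_div, div_eq_div_iff (by positivity) (by positivity)]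
          ring
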